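/- arXiv:1804.09338 — 4 statements merged into one kernel-verified Lean document; each statement's English description precedes it below -/
import Mathlib

section
/- Let T = (T₁, r₁) ∘ (T₂, r₂) be the composition of two disjoint rooted trees joined by the edge r₁r₂. Suppose f₁ is an IR2DF of T₁ with f₁(r₁) = 1, and f₂ : V(T₂) → {0,1,2} satisfies f₂(r₂) = 0, f₂(N_{T₂}[r₂]) = 1, f₂ is not an IR2DF of T₂, but f₂ restricted to T₂ − r₂ is an IR2DF of T₂ − r₂. Then the combined function f (with f|_{T₁} = f₁, f|_{T₂} = f₂) is an IR2DF of T with f(r₁) = 1. -/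
open scoped Classical

open Finset

noncomputable def nbrSum {V : Type*} [Fintype V] (G : SimpleGraph V) (f : V → ℕ) (v : V) : ℕ :=
  ∑ u ∈ Finset.univ.filter (fun u => G.Adj v u), f u

/-- `f(N[v])`: sum of `f` over the closed neighborhood of `v`. -/
noncomputable def closedNbrSum {V : Type*} [Fintype V] (G : SimpleGraph V) (f : V → ℕ) (v : V) : ℕ :=
  f v + nbrSum G f v

def IsR2DF {V : Type*} [Fintype V] (G : SimpleGraph V) (f : V → ℕ) : Prop :=
  (∀ v, f v ≤ 2) ∧ ∀ v, f v = 0 → 2 ≤ nbrSum G f v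

/-- `f` is an independent Roman {2}-dominating function on `G`. -/
def IsIR2DF {V : Type*} [Fintype V] (G : SimpleGraph V) (f : V → ℕ) : Prop :=
  IsR2DF G f ∧ ∀ ⦃u v : V⦄, G.Adj u v → f u = 0 ∨ f v = 0

/-- One-directional relation generating the composition `(T₁,r₁) ∘ (T₂,r₂)`. -/
def treeCompRel {V₁ V₂ : Type*} (T₁ : SimpleGraph V₁) (T₂ : SimpleGraph V₂) (r₁ : V₁) (r₂ : V₂) :
    (V₁ ⊕ V₂) → (V₁ ⊕ V₂) → Prop
  | .inl a, .inl b => T₁.Adj a b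
  | .inr a, .inr b => T₂.Adj a b
  | .inl a, .inr b => a = r₁ ∧ b = r₂
  | .inr _, .inl _ => False

/-- The composition `(T₁,r₁) ∘ (T₂,r₂)`: disjoint union plus the edge `r₁r₂`. -/
def compGraph {V₁ V₂ : Type*} (T₁ : SimpleGraph V₁) (T₂ : SimpleGraph V₂) (r₁ : V₁) (r₂ : V₂) :
    SimpleGraph (V₁ ⊕ V₂) :=
  SimpleGraph.fromRel (treeCompRel T₁ T₂ r₁ r₂)

/-- The graph `G - r` obtained by deleting the vertex `r`. -/
def delVert {V : Type*} (G : SimpleGraph V) (r : V) : SimpleGraph {v : V // v ≠ r} :=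
  SimpleGraph.induce {v : V | v ≠ r} G

section Aux

variable {V₁ V₂ : Type*} [Fintype V₁] [Fintype V₂] [DecidableEq V₁] [DecidableEq V₂]
  (T₁ : SimpleGraph V₁) (T₂ : SimpleGraph V₂) (r₁ : V₁) (r₂ : V₂)

lemma adj_ll (a b : V₁) : (compGraph T₁ T₂ r₁ r₂).Adj (.inl a) (.inl b) ↔ T₁.Adj a b := by
  simp only [compGraph, treeCompRel, SimpleGraph.fromRel_adj, ne_eq, Sum.inl.injEq]
  constructor
  · rintro ⟨h, h1 | h1⟩ <;> [exact h1; exact h1.symm]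
  · intro h; exact ⟨h.ne, Or.inl h⟩

lemma adj_lr (a : V₁) (b : V₂) :
    (compGraph T₁ T₂ r₁ r₂).Adj (.inl a) (.inr b) ↔ a = r₁ ∧ b = r₂ := by
  simp [compGraph, treeCompRel, SimpleGraph.fromRel_adj]

lemma adj_rl (a : V₂) (b : V₁) :
    (compGraph T₁ T₂ r₁ r₂).Adj (.inr a) (.inl b) ↔ b = r₁ ∧ a = r₂ := by
  simp [compGraph, treeCompRel, SimpleGraph.fromRel_adj]

lemma adj_rr (a b : V₂) : (compGraph T₁ T₂ r₁ r₂).Adj (.inr a) (.inr b) ↔ T₂.Adj a b := by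
  simp only [compGraph, treeCompRel, SimpleGraph.fromRel_adj, ne_eq, Sum.inr.injEq]
  constructor
  · rintro ⟨h, h1 | h1⟩ <;> [exact h1; exact h1.symm]
  · intro h; exact ⟨h.ne, Or.inl h⟩

lemma nbrSum_inl (f₁ : V₁ → ℕ) (f₂ : V₂ → ℕ) (a : V₁) :
    nbrSum (compGraph T₁ T₂ r₁ r₂) (Sum.elim f₁ f₂) (.inl a) =
      nbrSum T₁ f₁ a + (if a = r₁ then f₂ r₂ else 0) := by
  unfold nbrSum
  rw [Finset.sum_filter, Finset.sum_filter, Fintype.sum_sum_type]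
  congr 1
  · exact Finset.sum_congr rfl fun b _ => by rw [adj_ll]; simp
  · by_cases h : a = r₁
    · subst h
      simp only [adj_lr, true_and, Sum.elim_inr, if_pos rfl]
      simp [Finset.sum_ite_eq' Finset.univ r₂ f₂]
    · simp [adj_lr, h]

lemma nbrSum_inr (f₁ : V₁ → ℕ) (f₂ : V₂ → ℕ) (b : V₂) :
    nbrSum (compGraph T₁ T₂ r₁ r₂) (Sum.elim f₁ f₂) (.inr b) =
      (if b = r₂ then f₁ r₁ else 0) + nbrSum T₂ f₂ b := by
  unfold nbrSum
  rw [Finset.sum_filter, Finset.sum_filter, Fintype.sum_sum_type]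
  congr 1
  · by_cases h : b = r₂
    · subst h
      simp only [adj_rl, and_true, Sum.elim_inl, if_pos rfl]
      simp [Finset.sum_ite_eq' Finset.univ r₁ f₁]
    · simp [adj_rl, h]
  · exact Finset.sum_congr rfl fun c _ => by rw [adj_rr]; simp

lemma nbrSum_del_le (f₂ : V₂ → ℕ) (b : V₂) (hb : b ≠ r₂) :
    nbrSum (delVert T₂ r₂) (fun v => f₂ v.1) ⟨b, hb⟩ ≤ nbrSum T₂ f₂ b := by
  unfold nbrSum
  rw [Finset.sum_filter, Finset.sum_filter]
  have hadj : ∀ u : {v : V₂ // v ≠ r₂},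
      (delVert T₂ r₂).Adj ⟨b, hb⟩ u ↔ T₂.Adj b u.1 := by
    intro u; simp [delVert, SimpleGraph.induce]
  calc ∑ u : {v : V₂ // v ≠ r₂}, ite ((delVert T₂ r₂).Adj ⟨b, hb⟩ u) (f₂ u.1) 0
      = ∑ u : {v : V₂ // v ≠ r₂}, ite (T₂.Adj b u.1) (f₂ u.1) 0 := by
        exact Finset.sum_congr rfl fun u _ => by rw [hadj]
    _ = ∑ x ∈ Finset.univ.filter (· ≠ r₂), ite (T₂.Adj b x) (f₂ x) 0 := by
        rw [Finset.sum_subtype (p := fun v => v ≠ r₂) (Finset.univ.filter (· ≠ r₂)) (by simp)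
          (fun x => ite (T₂.Adj b x) (f₂ x) 0)]
    _ ≤ ∑ x : V₂, ite (T₂.Adj b x) (f₂ x) 0 :=
        Finset.sum_le_sum_of_subset (Finset.subset_univ _)

end Aux

theorem stmt_6 {V₁ V₂ : Type*} [Fintype V₁] [Fintype V₂] [DecidableEq V₁] [DecidableEq V₂]
    (T₁ : SimpleGraph V₁) (T₂ : SimpleGraph V₂) (hT₁ : T₁.IsTree) (hT₂ : T₂.IsTree)
    (r₁ : V₁) (r₂ : V₂)
    (f₁ : V₁ → ℕ) (f₂ : V₂ → ℕ)
    (hf₁ : IsIR2DF T₁ f₁) (hr₁ : f₁ r₁ = 1)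
    (hb₂ : ∀ v, f₂ v ≤ 2) (hr₂ : f₂ r₂ = 0)
    (hN : closedNbrSum T₂ f₂ r₂ = 1)
    (hnot : ¬ IsIR2DF T₂ f₂)
    (hdel : IsIR2DF (delVert T₂ r₂) (fun v => f₂ v.1)) :
    IsIR2DF (compGraph T₁ T₂ r₁ r₂) (Sum.elim f₁ f₂) ∧
      Sum.elim f₁ f₂ (Sum.inl r₁) = 1 := by
  have hN2 : nbrSum T₂ f₂ r₂ = 1 := by
    have := hN; unfold closedNbrSum at this; omega
  refine ⟨⟨⟨?_, ?_⟩, ?_⟩, by simpa using hr₁⟩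
  · rintro (a | b)
    · exact hf₁.1.1 a
    · exact hb₂ b
  · rintro (a | b) h
    · simp only [Sum.elim_inl] at h
      rw [nbrSum_inl]
      exact le_trans (hf₁.1.2 a h) (Nat.le_add_right _ _)
    · simp only [Sum.elim_inr] at h
      rw [nbrSum_inr]
      by_cases hb : b = r₂
      · subst hb
        rw [if_pos rfl, hr₁, hN2]
      · rw [if_neg hb]
        have h2 := hdel.1.2 ⟨b, hb⟩ (by simpa using h)
        exact le_trans (le_trans h2 (nbrSum_del_le T₂ r₂ f₂ b hb)) (Nat.le_add_left _ _)
  · rintro (a | a) (b | b) hadj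
    · rw [adj_ll] at hadj
      exact hf₁.2 hadj
    · rw [adj_lr] at hadj
      right; simp [hadj.2, hr₂]
    · rw [adj_rl] at hadj
      left; simp [hadj.2, hr₂]
    · rw [adj_rr] at hadj
      by_cases ha : a = r₂
      · left; simp [ha, hr₂]
      · by_cases hb : b = r₂
        · right; simp [hb, hr₂]
        · have : (delVert T₂ r₂).Adj ⟨a, ha⟩ ⟨b, hb⟩ := by
            simpa [delVert, SimpleGraph.induce] using hadj
          exact hdel.2 this
end

section
/- Let T = (T₁, r₁) ∘ (T₂, r₂) with root r = r₁. If f is an IR2DF of T with f(r) = 0 and f(r₂) = 1, then f|_{T₂} is an IR2DF of T₂, and either f|_{T₁} is an IR2DF of T₁, or f|_{T₁} is not an IR2DF of T₁ but f(N_{T₁}[r₁]) = 1 and f restricted to T₁ − r₁ is an IR2DF of T₁ − r₁. -/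
open scoped Classical

open Finset

section Aux

variable {V₁ V₂ : Type*} [Fintype V₁] [Fintype V₂]
  {T₁ : SimpleGraph V₁} {T₂ : SimpleGraph V₂} {r₁ : V₁} {r₂ : V₂}

lemma comp_adj_inl_inl {a b : V₁} :
    (compGraph T₁ T₂ r₁ r₂).Adj (.inl a) (.inl b) ↔ T₁.Adj a b := by
  constructor
  · rintro ⟨hne, h | h⟩
    · exact h
    · exact (h : T₁.Adj b a).symm
  · intro h
    exact ⟨by simpa using h.ne, Or.inl h⟩

lemma comp_adj_inr_inr {a b : V₂} :
    (compGraph T₁ T₂ r₁ r₂).Adj (.inr a) (.inr b) ↔ T₂.Adj a b := by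
  constructor
  · rintro ⟨hne, h | h⟩
    · exact h
    · exact (h : T₂.Adj b a).symm
  · intro h
    exact ⟨by simpa using h.ne, Or.inl h⟩

lemma comp_adj_inl_inr {a : V₁} {b : V₂} :
    (compGraph T₁ T₂ r₁ r₂).Adj (.inl a) (.inr b) ↔ a = r₁ ∧ b = r₂ := by
  constructor
  · rintro ⟨hne, h | h⟩
    · exact h
    · exact absurd h (by simp [treeCompRel])
  · intro h
    exact ⟨by simp, Or.inl h⟩

lemma comp_adj_inr_inl {a : V₂} {b : V₁} :
    (compGraph T₁ T₂ r₁ r₂).Adj (.inr a) (.inl b) ↔ b = r₁ ∧ a = r₂ := by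
  rw [SimpleGraph.adj_comm]; exact comp_adj_inl_inr

lemma nbrSum_eq_sum_ite {V : Type*} [Fintype V] (G : SimpleGraph V) (f : V → ℕ) (v : V) :
    nbrSum G f v = ∑ u, if G.Adj v u then f u else 0 := by
  rw [nbrSum, Finset.sum_filter]

lemma nbrSum_comp_inr (f : V₁ ⊕ V₂ → ℕ) (hfr : f (Sum.inl r₁) = 0) (v : V₂) :
    nbrSum (compGraph T₁ T₂ r₁ r₂) f (.inr v) = nbrSum T₂ (fun u => f (.inr u)) v := by
  rw [nbrSum_eq_sum_ite, nbrSum_eq_sum_ite, Fintype.sum_sum_type]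
  have h1 : ∑ a : V₁, (if (compGraph T₁ T₂ r₁ r₂).Adj (.inr v) (.inl a) then f (.inl a) else 0)
      = 0 := by
    apply Finset.sum_eq_zero
    intro a _
    split_ifs with h
    · obtain ⟨ha, _⟩ := comp_adj_inr_inl.mp h
      rw [ha, hfr]
    · rfl
  rw [h1, zero_add]
  apply Finset.sum_congr rfl
  intro b _
  rw [comp_adj_inr_inr]

lemma nbrSum_comp_inl (f : V₁ ⊕ V₂ → ℕ) (v : V₁) :
    nbrSum (compGraph T₁ T₂ r₁ r₂) f (.inl v)
      = nbrSum T₁ (fun u => f (.inl u)) v + (if v = r₁ then f (.inr r₂) else 0) := by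
  rw [nbrSum_eq_sum_ite, nbrSum_eq_sum_ite, Fintype.sum_sum_type]
  congr 1
  · apply Finset.sum_congr rfl
    intro a _
    rw [comp_adj_inl_inl]
  · by_cases hv : v = r₁
    · simp only [comp_adj_inl_inr, hv, true_and]
      simp
    · simp [comp_adj_inl_inr, hv]

lemma nbrSum_del [DecidableEq V₁] (g : V₁ → ℕ) (hg : g r₁ = 0) (v : {x : V₁ // x ≠ r₁}) :
    nbrSum (delVert T₁ r₁) (fun u => g u.1) v = nbrSum T₁ g v.1 := by
  rw [nbrSum_eq_sum_ite, nbrSum_eq_sum_ite]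
  have hdel : ∀ u : {x : V₁ // x ≠ r₁},
      (delVert T₁ r₁).Adj v u ↔ T₁.Adj v.1 u.1 := fun u => Iff.rfl
  simp only [hdel]
  have h1 : (∑ u : {x : V₁ // x ≠ r₁}, if T₁.Adj v.1 u.1 then g u.1 else 0)
      = ∑ u ∈ Finset.univ.erase r₁, if T₁.Adj v.1 u then g u else 0 :=
    (Finset.sum_subtype (p := fun x => x ≠ r₁) (Finset.univ.erase r₁) (fun x => by simp)
      (fun u => if T₁.Adj v.1 u then g u else 0)).symm
  rw [h1, ← Finset.sum_erase_add Finset.univ _ (Finset.mem_univ r₁)]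
  simp [hg]

end Aux

theorem stmt_8 {V₁ V₂ : Type*} [Fintype V₁] [Fintype V₂] [DecidableEq V₁] [DecidableEq V₂]
    (T₁ : SimpleGraph V₁) (T₂ : SimpleGraph V₂) (hT₁ : T₁.IsTree) (hT₂ : T₂.IsTree)
    (r₁ : V₁) (r₂ : V₂)
    (f : V₁ ⊕ V₂ → ℕ) (hf : IsIR2DF (compGraph T₁ T₂ r₁ r₂) f)
    (h0 : f (Sum.inl r₁) = 0) (h1 : f (Sum.inr r₂) = 1) :
    IsIR2DF T₂ (fun v => f (Sum.inr v)) ∧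
      (IsIR2DF T₁ (fun v => f (Sum.inl v)) ∨
        (¬ IsIR2DF T₁ (fun v => f (Sum.inl v)) ∧
          closedNbrSum T₁ (fun v => f (Sum.inl v)) r₁ = 1 ∧
          IsIR2DF (delVert T₁ r₁) (fun v => f (Sum.inl v.1)))) := by
  obtain ⟨⟨hle, hdom⟩, hind⟩ := hf
  constructor
  · -- T₂ part
    refine ⟨⟨fun v => hle _, fun v hv => ?_⟩, fun u v huv => ?_⟩
    · have := hdom (.inr v) hv
      rwa [nbrSum_comp_inr f h0 v] at this
    · exact hind (comp_adj_inr_inr.mpr huv)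
  · -- T₁ part
    have hr₁ : 1 ≤ nbrSum T₁ (fun u => f (.inl u)) r₁ := by
      have := hdom (.inl r₁) h0
      rw [nbrSum_comp_inl f r₁, if_pos rfl, h1] at this
      omega
    by_cases h2 : 2 ≤ nbrSum T₁ (fun u => f (.inl u)) r₁
    · left
      refine ⟨⟨fun v => hle _, fun v hv => ?_⟩, fun u v huv => ?_⟩
      · by_cases hv₁ : v = r₁
        · subst hv₁; exact h2
        · have := hdom (.inl v) hv
          rwa [nbrSum_comp_inl f v, if_neg hv₁, add_zero] at this
      · exact hind (comp_adj_inl_inl.mpr huv)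
    · right
      have heq : nbrSum T₁ (fun u => f (.inl u)) r₁ = 1 := by omega
      refine ⟨fun h => h2 (h.1.2 r₁ h0), ?_, ?_⟩
      · rw [closedNbrSum, h0, heq]
      · refine ⟨⟨fun v => hle _, fun v hv => ?_⟩, fun u v huv => ?_⟩
        · rw [nbrSum_del (fun u => f (.inl u)) h0 v]
          have := hdom (.inl v.1) hv
          rwa [nbrSum_comp_inl f v.1, if_neg v.2, add_zero] at this
        · exact hind (comp_adj_inl_inl.mpr huv)
end

section
/- Let G be a connected block graph that is not complete, T_G its block-cutpoint tree, and f an R2DF of G satisfying the normalization of Lemma 8. If v is a cut-vertex of G with f(v) = 0, then in T_G, with f_* the induced function, either there exists u ∈ N²_{T_G}(v) with f_*(u) = 2, or there exist two distinct vertices u₁, u₂ ∈ N²_{T_G}(v) with f_*(u₁) = f_*(u₂) = 1. -/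
open scoped Classical

open Finset

/-- `v` is a cut-vertex: deleting it disconnects the graph. -/
def IsCutVertex {V : Type*} (G : SimpleGraph V) (v : V) : Prop :=
  ¬ (SimpleGraph.induce {u : V | u ≠ v} G).Preconnected

/-- A graph with no cut-vertex. -/
def HasNoCutVertex {V : Type*} (G : SimpleGraph V) : Prop :=
  ∀ v, ¬ IsCutVertex G v

/-- `B` is a block of `G`: a maximal set inducing a connected subgraph without cut-vertices. -/
def IsBlock {V : Type*} (G : SimpleGraph V) (B : Set V) : Prop :=
  B.Nonempty ∧ (SimpleGraph.induce B G).Connected ∧ HasNoCutVertex (SimpleGraph.induce B G) ∧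
    ∀ B' : Set V, B ⊆ B' → (SimpleGraph.induce B' G).Connected →
      HasNoCutVertex (SimpleGraph.induce B' G) → B' = B

/-- The set of cut-vertices of `G` lying in `B`. -/
def cutSet {V : Type*} (G : SimpleGraph V) (B : Set V) : Set V :=
  {v ∈ B | IsCutVertex G v}

/-- `G` is a block graph: every block is a clique. -/
def IsBlockGraph {V : Type*} (G : SimpleGraph V) : Prop :=
  ∀ B : Set V, IsBlock G B → G.IsClique B

/-- Vertices of the block-cutpoint tree: cut-vertices plus one vertex per block. -/
abbrev BCVert {V : Type*} (G : SimpleGraph V) : Type _ :=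
  {v : V // IsCutVertex G v} ⊕ {B : Set V // IsBlock G B}

/-- Relation generating the block-cutpoint tree: a cut-vertex is joined to each block containing it. -/
def bcRel {V : Type*} (G : SimpleGraph V) : BCVert G → BCVert G → Prop
  | .inl v, .inr B => v.1 ∈ B.1
  | _, _ => False

/-- The block-cutpoint tree of `G`. -/
def bcGraph {V : Type*} (G : SimpleGraph V) : SimpleGraph (BCVert G) :=
  SimpleGraph.fromRel (bcRel G)

/-- The induced function `f⋆` on the block-cutpoint tree: the value of `f` at cut-vertices,
and `f(H) - f(I)` (the sum of `f` over non-cut-vertices of `H`) at block-vertices. -/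
noncomputable def fstar {V : Type*} [Fintype V] (G : SimpleGraph V) (f : V → ℕ) :
    BCVert G → ℕ
  | .inl v => f v.1
  | .inr B => ∑ v ∈ B.1.toFinset.filter (fun v => ¬ IsCutVertex G v), f v

/-- `y` lies in the closed second neighborhood `N²[x]` of `x`. -/
def InN2 {W : Type*} (H : SimpleGraph W) (x y : W) : Prop :=
  x = y ∨ H.Adj x y ∨ ∃ z, H.Adj x z ∧ H.Adj z y

lemma pair_connected {V : Type*} (G : SimpleGraph V) {u w : V} (h : G.Adj u w) :
    (SimpleGraph.induce ({u, w} : Set V) G).Connected := by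
  have : Nonempty ↥({u, w} : Set V) := ⟨⟨u, Or.inl rfl⟩⟩
  constructor
  intro x y
  by_cases hxy : (x : V) = (y : V)
  · exact (Subtype.ext hxy) ▸ SimpleGraph.Reachable.refl x
  · have hx : (x : V) = u ∨ (x : V) = w := x.2
    have hy : (y : V) = u ∨ (y : V) = w := y.2
    have hadj : G.Adj (x : V) (y : V) := by
      rcases hx with hx | hx <;> rcases hy with hy | hy
      · exact absurd (hx.trans hy.symm) hxy
      · rw [hx, hy]; exact h
      · rw [hx, hy]; exact h.symm
      · exact absurd (hx.trans hy.symm) hxy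
    exact (SimpleGraph.Adj.reachable (by exact hadj))

lemma pair_nocut {V : Type*} (G : SimpleGraph V) {u w : V} :
    HasNoCutVertex (SimpleGraph.induce ({u, w} : Set V) G) := by
  intro a ha
  apply ha
  intro x y
  have hxy : x = y := by
    have hx1 : (x : ({u, w} : Set V)) ≠ a := x.2
    have hy1 : (y : ({u, w} : Set V)) ≠ a := y.2
    have hx2 : ((x : ({u, w} : Set V)) : V) ≠ (a : V) := fun h => hx1 (Subtype.ext h)
    have hy2 : ((y : ({u, w} : Set V)) : V) ≠ (a : V) := fun h => hy1 (Subtype.ext h)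
    have hxm : ((x : ({u, w} : Set V)) : V) = u ∨ ((x : ({u, w} : Set V)) : V) = w := (x : ({u, w} : Set V)).2
    have hym : ((y : ({u, w} : Set V)) : V) = u ∨ ((y : ({u, w} : Set V)) : V) = w := (y : ({u, w} : Set V)).2
    have ham : ((a : ({u, w} : Set V)) : V) = u ∨ ((a : ({u, w} : Set V)) : V) = w := a.2
    apply Subtype.ext; apply Subtype.ext
    rcases ham with ham | ham <;>
      rcases hxm with hxm | hxm <;> rcases hym with hym | hym <;>
      first
        | (exact hxm.trans hym.symm)
        | (exact absurd (hxm.trans ham.symm) hx2)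
        | (exact absurd (hym.trans ham.symm) hy2)
  exact hxy ▸ SimpleGraph.Reachable.refl x

lemma exists_block_of_adj {V : Type*} [Fintype V] (G : SimpleGraph V) {u w : V}
    (h : G.Adj u w) : ∃ B : Set V, IsBlock G B ∧ u ∈ B ∧ w ∈ B := by
  classical
  let P : Set V → Prop := fun B => ({u, w} : Set V) ⊆ B ∧
    (SimpleGraph.induce B G).Connected ∧ HasNoCutVertex (SimpleGraph.induce B G)
  let T : Finset (Finset V) := Finset.univ.filter (fun s => P (↑s : Set V))
  have hpair : ({u, w} : Set V).toFinset ∈ T := by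
    simp only [T, Finset.mem_filter, Finset.mem_univ, true_and]
    rw [Set.coe_toFinset]
    exact ⟨subset_rfl, pair_connected G h, pair_nocut G⟩
  obtain ⟨s, hsT, hsmax⟩ := T.exists_max_image (fun s => s.card) ⟨_, hpair⟩
  simp only [T, Finset.mem_filter, Finset.mem_univ, true_and] at hsT
  obtain ⟨hsub, hcon, hnocut⟩ := hsT
  refine ⟨(↑s : Set V), ⟨⟨u, hsub (Or.inl rfl)⟩, hcon, hnocut, ?_⟩,
    hsub (Or.inl rfl), hsub (Or.inr rfl)⟩
  intro B' hBB' hcon' hnocut'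
  have hB'T : B'.toFinset ∈ T := by
    simp only [T, Finset.mem_filter, Finset.mem_univ, true_and]
    rw [Set.coe_toFinset]
    exact ⟨fun x hx => hBB' (hsub hx), hcon', hnocut'⟩
  have hcard := hsmax _ hB'T
  have hsub2 : s ⊆ B'.toFinset := by
    intro x hx; rw [Set.mem_toFinset]; exact hBB' hx
  have : B'.toFinset = s := Finset.eq_of_subset_of_card_le hsub2 hcard |>.symm
  rw [← this, Set.coe_toFinset]

lemma bc_adj {V : Type*} (G : SimpleGraph V) {v : V} (hv : IsCutVertex G v)
    {B : Set V} (hB : IsBlock G B) (hvB : v ∈ B) :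
    (bcGraph G).Adj (Sum.inl ⟨v, hv⟩) (Sum.inr ⟨B, hB⟩) := by
  rw [bcGraph, SimpleGraph.fromRel_adj]
  exact ⟨by simp, Or.inl hvB⟩

lemma cut_lt {V : Type*} [Fintype V] (G : SimpleGraph V) {B : Set V} {u : V}
    (huB : u ∈ B) (hu : ¬ IsCutVertex G u) :
    (cutSet G B).ncard + 1 ≤ B.ncard := by
  have hsub : cutSet G B ⊂ B :=
    ⟨fun x hx => hx.1, fun h => hu ((h huB).2)⟩
  have := Set.ncard_lt_ncard hsub (Set.toFinite B)
  omega

lemma type1_filter {V : Type*} [Fintype V] (G : SimpleGraph V) (f : V → ℕ)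
    (hnorm2 : ∀ B : Set V, IsBlock G B → (cutSet G B).ncard + 2 ≤ B.ncard →
      ∀ v ∈ B, ¬ IsCutVertex G v → f v = 0)
    {B : Set V} {u : V} (hB : IsBlock G B) (huB : u ∈ B) (hu : ¬ IsCutVertex G u)
    (hfu : f u ≠ 0) :
    B.toFinset.filter (fun z => ¬ IsCutVertex G z) = {u} := by
  have h1 := cut_lt G huB hu
  have hcase : B.ncard = (cutSet G B).ncard + 1 := by
    by_contra hcon
    exact hfu (hnorm2 B hB (by omega) u huB hu)
  have hset : (↑(B.toFinset.filter (fun z => ¬ IsCutVertex G z)) : Set V) = B \ cutSet G B := by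
    ext x
    simp only [Finset.coe_filter, Set.mem_toFinset, Set.mem_setOf_eq, Set.mem_diff,
      cutSet, Set.mem_sep_iff]
    tauto
  have hcard : (B.toFinset.filter (fun z => ¬ IsCutVertex G z)).card = 1 := by
    have := Set.ncard_coe_finset (B.toFinset.filter (fun z => ¬ IsCutVertex G z))
    rw [hset] at this
    rw [Set.ncard_diff (show cutSet G B ⊆ B from fun x hx => hx.1) (Set.toFinite _)] at this
    omega
  obtain ⟨a, ha⟩ := Finset.card_eq_one.mp hcard
  have humem : u ∈ B.toFinset.filter (fun z => ¬ IsCutVertex G z) := by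
    simp only [Finset.mem_filter, Set.mem_toFinset]
    exact ⟨huB, hu⟩
  rw [ha, Finset.mem_singleton] at humem
  rw [← humem] at ha
  exact ha

lemma pick {V : Type*} [Fintype V] (G : SimpleGraph V) (f : V → ℕ)
    (hnorm2 : ∀ B : Set V, IsBlock G B → (cutSet G B).ncard + 2 ≤ B.ncard →
      ∀ v ∈ B, ¬ IsCutVertex G v → f v = 0)
    {v u : V} (hv : IsCutVertex G v) (hadj : G.Adj v u) (hfu : f u = 1) :
    ∃ w : BCVert G, InN2 (bcGraph G) (Sum.inl ⟨v, hv⟩) w ∧ fstar G f w = 1 ∧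
      ((∃ hu : IsCutVertex G u, w = Sum.inl ⟨u, hu⟩) ∨
       (∃ (B : Set V) (hB : IsBlock G B), w = Sum.inr ⟨B, hB⟩ ∧
         B.toFinset.filter (fun z => ¬ IsCutVertex G z) = {u})) := by
  obtain ⟨B, hB, hvB, huB⟩ := exists_block_of_adj G hadj
  by_cases hu : IsCutVertex G u
  · refine ⟨Sum.inl ⟨u, hu⟩, ?_, hfu, Or.inl ⟨hu, rfl⟩⟩
    exact Or.inr (Or.inr ⟨Sum.inr ⟨B, hB⟩, bc_adj G hv hB hvB, (bc_adj G hu hB huB).symm⟩)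
  · have hfilt := type1_filter G f hnorm2 hB huB hu (by omega)
    refine ⟨Sum.inr ⟨B, hB⟩, Or.inr (Or.inl (bc_adj G hv hB hvB)), ?_,
      Or.inr ⟨B, hB, rfl, hfilt⟩⟩
    show (∑ z ∈ B.toFinset.filter (fun z => ¬ IsCutVertex G z), f z) = 1
    rw [hfilt, Finset.sum_singleton, hfu]

theorem stmt_13 {V : Type*} [Fintype V] (G : SimpleGraph V)
    (hconn : G.Connected) (hbg : IsBlockGraph G)
    (hnc : ∃ a b : V, a ≠ b ∧ ¬ G.Adj a b)
    (f : V → ℕ) (hf : IsR2DF G f)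
    (hnorm1 : ∀ B : Set V, IsBlock G B → B.ncard = (cutSet G B).ncard + 1 →
      ∀ v ∈ B, ¬ IsCutVertex G v → f v ≤ 1)
    (hnorm2 : ∀ B : Set V, IsBlock G B → (cutSet G B).ncard + 2 ≤ B.ncard →
      ∀ v ∈ B, ¬ IsCutVertex G v → f v = 0)
    (v : V) (hv : IsCutVertex G v) (hv0 : f v = 0) :
    (∃ u : BCVert G, InN2 (bcGraph G) (Sum.inl ⟨v, hv⟩) u ∧ fstar G f u = 2) ∨
    (∃ u₁ u₂ : BCVert G, u₁ ≠ u₂ ∧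
      InN2 (bcGraph G) (Sum.inl ⟨v, hv⟩) u₁ ∧ InN2 (bcGraph G) (Sum.inl ⟨v, hv⟩) u₂ ∧
      fstar G f u₁ = 1 ∧ fstar G f u₂ = 1) := by
  classical
  have hsum : 2 ≤ ∑ u ∈ Finset.univ.filter (fun u => G.Adj v u), f u := hf.2 v hv0
  by_cases hex : ∃ u, G.Adj v u ∧ f u = 2
  · -- some neighbor has f = 2; it must be a cut-vertex
    obtain ⟨u, hadj, hfu⟩ := hex
    obtain ⟨B, hB, hvB, huB⟩ := exists_block_of_adj G hadj
    have hucut : IsCutVertex G u := by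
      by_contra hu
      have h1 := cut_lt G huB hu
      rcases Nat.lt_or_ge ((cutSet G B).ncard + 1) B.ncard with hlt | hge
      · have := hnorm2 B hB (by omega) u huB hu; omega
      · have := hnorm1 B hB (by omega) u huB hu; omega
    refine Or.inl ⟨Sum.inl ⟨u, hucut⟩, ?_, hfu⟩
    exact Or.inr (Or.inr ⟨Sum.inr ⟨B, hB⟩, bc_adj G hv hB hvB, (bc_adj G hucut hB huB).symm⟩)
  · push_neg at hex
    have hle : ∀ u, G.Adj v u → f u ≤ 1 := by
      intro u h
      have h2 := hf.1 u
      have h3 := hex u h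
      omega
    set s := Finset.univ.filter (fun u => G.Adj v u) with hs
    -- find first vertex with f = 1
    have h1 : ∃ u ∈ s, f u = 1 := by
      by_contra hc
      push_neg at hc
      have hz : ∀ u ∈ s, f u = 0 := by
        intro u hu
        have := hle u (by simpa [hs] using hu)
        have := hc u hu
        omega
      rw [Finset.sum_eq_zero hz] at hsum
      omega
    obtain ⟨u₁, hu₁s, hfu₁⟩ := h1
    have hsplit := Finset.sum_erase_add s f hu₁s
    have h2 : ∃ u ∈ s.erase u₁, f u = 1 := by
      by_contra hc
      push_neg at hc
      have hz : ∀ u ∈ s.erase u₁, f u = 0 := by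
        intro u hu
        have := hle u (by simpa [hs] using Finset.mem_of_mem_erase hu)
        have := hc u hu
        omega
      rw [Finset.sum_eq_zero hz] at hsplit
      omega
    obtain ⟨u₂, hu₂s, hfu₂⟩ := h2
    have hne : u₁ ≠ u₂ := fun h => (Finset.mem_erase.mp hu₂s).1 h.symm
    have hadj₁ : G.Adj v u₁ := by simpa [hs] using hu₁s
    have hadj₂ : G.Adj v u₂ := by simpa [hs] using Finset.mem_of_mem_erase hu₂s
    obtain ⟨w₁, hw₁n, hw₁f, hw₁id⟩ := pick G f hnorm2 hv hadj₁ hfu₁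
    obtain ⟨w₂, hw₂n, hw₂f, hw₂id⟩ := pick G f hnorm2 hv hadj₂ hfu₂
    refine Or.inr ⟨w₁, w₂, ?_, hw₁n, hw₂n, hw₁f, hw₂f⟩
    intro heq
    rcases hw₁id with ⟨hc₁, rfl⟩ | ⟨B₁, hB₁, rfl, hfilt₁⟩ <;>
      rcases hw₂id with ⟨hc₂, h₂⟩ | ⟨B₂, hB₂, h₂, hfilt₂⟩ <;> rw [h₂] at heq
    · exact hne (congrArg Subtype.val (Sum.inl.inj heq))
    · exact Sum.inl_ne_inr heq
    · exact Sum.inr_ne_inl heq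
    · have hBeq : B₁ = B₂ := congrArg Subtype.val (Sum.inr.inj heq)
      rw [hBeq, hfilt₂] at hfilt₁
      exact hne (Finset.singleton_inj.mp hfilt₁).symm
end

section
/- Let G be a connected block graph that is not complete and T_G its block-cutpoint tree. Suppose f_* : V(T_G) → {0,1,2} satisfies: (1) f_*(h) ∈ {0,1} for type-1 block-vertices, (2) f_*(h) = 0 for block-vertices of type 0 or 2, (3) for every cut-vertex v with f_*(v) = 0 there is u ∈ N²_{T_G}(v) with f_*(u) = 2 or two vertices u₁,u₂ ∈ N²_{T_G}(v) with f_*(u₁) = f_*(u₂) = 1, and (4) for every type-1 or type-2 block-vertex h with f_*(h) = 0 there is u ∈ N_{T_G}(h) with f_*(u) = 2 or u₁,u₂ ∈ N_{T_G}(h) with f_*(u₁) = f_*(u₂) = 1. Then the function f on G defined by f(v) = f_*(v) for cut-vertices v and f(v) = f_*(h) for non-cut-vertices v in block H is a Roman {2}-dominating function of G of the same total weight as f_*. -/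
open scoped Classical

open Finset

section Helpers
section Helpers
variable {V : Type*} {G : SimpleGraph V}

lemma induce_adj' {s : Set V} {a b : s} :
    (SimpleGraph.induce s G).Adj a b ↔ G.Adj a b := Iff.rfl

lemma reach_of_walk {s : Set V} {a b : V} (p : G.Walk a b)
    (hs : ∀ x ∈ p.support, x ∈ s) (ha : a ∈ s) (hb : b ∈ s) :
    (SimpleGraph.induce s G).Reachable ⟨a, ha⟩ ⟨b, hb⟩ := by
  induction p with
  | nil => exact SimpleGraph.Reachable.refl _
  | @cons a c b h p ih =>
    have hc : c ∈ s := hs c (by simp [SimpleGraph.Walk.support_cons])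
    have h1 : (SimpleGraph.induce s G).Adj ⟨a, ha⟩ ⟨c, hc⟩ := h
    exact (h1.reachable).trans (ih (fun x hx => hs x (by simp [SimpleGraph.Walk.support_cons, hx])) hc hb)

lemma precon_double {s : Set V} (z : ↥s)
    (h : (SimpleGraph.induce (s \ {z.1}) G).Preconnected) :
    (SimpleGraph.induce {u : ↥s | u ≠ z} (SimpleGraph.induce s G)).Preconnected := by
  exact h.map
    ⟨fun x => ⟨⟨x.1, x.2.1⟩, fun hx => x.2.2 (congrArg Subtype.val hx)⟩, fun h => h⟩
    (fun y => ⟨⟨y.1.1, y.1.2, fun hmem => y.2 (Subtype.ext hmem)⟩, Subtype.ext (Subtype.ext rfl)⟩)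

lemma noCut_of_del_precon {s : Set V}
    (h : ∀ x : V, x ∈ s → (SimpleGraph.induce (s \ {x}) G).Preconnected) :
    HasNoCutVertex (SimpleGraph.induce s G) := by
  intro z hz
  exact hz (precon_double z (h z.1 z.2))

lemma reach_hub {C : Set V} {h a : V} (hh : h ∈ C) (ha : a ∈ C)
    (hadj : a = h ∨ G.Adj a h) : (SimpleGraph.induce C G).Reachable ⟨a, ha⟩ ⟨h, hh⟩ := by
  rcases hadj with rfl | hadj
  · exact SimpleGraph.Reachable.refl _
  · exact SimpleGraph.Adj.reachable (by exact hadj)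

lemma precon_of_hub {C : Set V} {h : V} (hh : h ∈ C)
    (hr : ∀ a, (ha : a ∈ C) → (SimpleGraph.induce C G).Reachable ⟨a, ha⟩ ⟨h, hh⟩) :
    (SimpleGraph.induce C G).Preconnected := by
  intro a b
  exact (hr a.1 a.2).trans (hr b.1 b.2).symm

lemma exists_block [Fintype V] (v : V) :
    ∃ B : Set V, IsBlock G B ∧ v ∈ B := by
  classical
  set P : Set V → Prop := fun S => v ∈ S ∧ (SimpleGraph.induce S G).Connected ∧
    HasNoCutVertex (SimpleGraph.induce S G) with hPdef
  have hP : P {v} := by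
    refine ⟨rfl, ?_, ?_⟩
    · haveI : Nonempty ↥({v} : Set V) := ⟨⟨v, rfl⟩⟩
      constructor
      intro a b
      have hab : a = b := Subtype.ext (a.2.trans b.2.symm)
      exact hab ▸ SimpleGraph.Reachable.refl _
    · intro z hz
      apply hz
      intro a b
      exact absurd (Subtype.ext (a.1.2.trans z.2.symm)) a.2
  obtain ⟨B, hB, hmax⟩ := Set.Finite.exists_maximalFor Set.ncard {S | P S}
    (Set.toFinite _) ⟨{v}, hP⟩
  refine ⟨B, ⟨⟨v, hB.1⟩, hB.2.1, hB.2.2, ?_⟩, hB.1⟩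
  intro B' hsub hconn hncv
  have hP' : P B' := ⟨hsub hB.1, hconn, hncv⟩
  have hle : B.ncard ≤ B'.ncard := Set.ncard_le_ncard hsub (Set.toFinite _)
  have heq := le_antisymm hle (hmax hP' hle)
  exact (Set.eq_of_subset_of_ncard_le hsub (le_of_eq heq.symm) (Set.toFinite _)).symm

lemma split_avoid {a z u v : V} {q : G.Walk u v} (hq : q.IsPath) (ha : a ∈ q.support)
    (haz : a ≠ z) :
    z ∉ (q.takeUntil a ha).support ∨ z ∉ (q.dropUntil a ha).support := by
  by_contra h
  push_neg at h
  obtain ⟨h1, h2⟩ := h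
  have hnodup := hq.support_nodup
  rw [← q.take_spec ha, SimpleGraph.Walk.support_append] at hnodup
  have hd := List.disjoint_of_nodup_append hnodup
  have hz2 : z ∈ (q.dropUntil a ha).support.tail := by
    have hc := (q.dropUntil a ha).support_eq_cons
    rw [hc] at h2
    rcases List.mem_cons.mp h2 with h | h
    · exact absurd h.symm haz
    · exact h
  exact hd h1 hz2
lemma block_unique [Fintype V] (hbg : IsBlockGraph G) {B₁ B₂ : Set V}
    (hB1 : IsBlock G B₁) (hB2 : IsBlock G B₂) {w : V} (hw1 : w ∈ B₁) (hw2 : w ∈ B₂)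
    (hnc : ¬ IsCutVertex G w) : B₁ = B₂ := by
  classical
  by_contra hne
  have hc1 := hbg B₁ hB1
  have hc2 := hbg B₂ hB2
  have hnsub : ¬ B₂ ⊆ B₁ := fun hsub =>
    hne (hB2.2.2.2 B₁ hsub hB1.2.1 hB1.2.2.1)
  have hnsub' : ¬ B₁ ⊆ B₂ := fun hsub =>
    hne (hB1.2.2.2 B₂ hsub hB2.2.1 hB2.2.2.1).symm
  obtain ⟨b₂, hb₂, hb₂n⟩ := Set.not_subset.mp hnsub
  obtain ⟨b₁, hb₁, hb₁n⟩ := Set.not_subset.mp hnsub'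
  have hb₁w : b₁ ≠ w := fun h => hb₁n (h ▸ hw2)
  have hb₂w : b₂ ≠ w := fun h => hb₂n (h ▸ hw1)
  -- Step 1 : B₁ ∩ B₂ ⊆ {w}
  have hint : ∀ x ∈ B₁ ∩ B₂, x = w := by
    intro x hx
    by_contra hxw
    set S := B₁ ∪ B₂ with hS
    have hxS : x ∈ S := Or.inl hx.1
    have hadj : ∀ a ∈ S, ∀ h₀ ∈ B₁ ∩ B₂, a = h₀ ∨ G.Adj a h₀ := by
      intro a ha h₀ hh
      by_cases hah : a = h₀
      · exact Or.inl hah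
      · rcases ha with ha | ha
        · exact Or.inr (hc1 ha hh.1 hah)
        · exact Or.inr (hc2 ha hh.2 hah)
    have hconnS : (SimpleGraph.induce S G).Connected := by
      haveI : Nonempty ↥S := ⟨⟨x, hxS⟩⟩
      constructor
      exact precon_of_hub hxS (fun a ha => reach_hub hxS ha (hadj a ha x hx))
    have hncvS : HasNoCutVertex (SimpleGraph.induce S G) := by
      apply noCut_of_del_precon
      intro z hzS
      have key : ∀ h₀, h₀ ∈ B₁ ∩ B₂ → h₀ ≠ z →
          (SimpleGraph.induce (S \ {z}) G).Preconnected := by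
        intro h₀ hm hnz
        have hh : h₀ ∈ S \ {z} := ⟨Or.inl hm.1, hnz⟩
        exact precon_of_hub hh (fun a ha => reach_hub hh ha (hadj a ha.1 h₀ hm))
      by_cases hzx : z = x
      · refine key w ⟨hw1, hw2⟩ (fun hwz => hxw ?_)
        rw [hzx] at hwz; exact hwz.symm
      · exact key x hx (fun h => hzx h.symm)
    have hSB : S = B₁ := hB1.2.2.2 S (fun y hy => Or.inl hy) hconnS hncvS
    exact hb₂n (hSB ▸ (Or.inr hb₂ : b₂ ∈ S))
  -- Step 2 : path avoiding w
  have hp : (SimpleGraph.induce {u : V | u ≠ w} G).Preconnected := not_not.mp hnc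
  obtain ⟨p0⟩ := hp ⟨b₁, hb₁w⟩ ⟨b₂, hb₂w⟩
  let hom : (SimpleGraph.induce {u : V | u ≠ w} G) →g G := ⟨Subtype.val, fun h => h⟩
  let p1 : G.Walk b₁ b₂ := p0.map hom
  let q : G.Path b₁ b₂ := p1.toPath
  have hqsup : ∀ x ∈ (q.1 : G.Walk b₁ b₂).support, x ≠ w := by
    intro x hxs
    have hx1 : x ∈ p1.support := SimpleGraph.Walk.support_toPath_subset _ hxs
    rw [SimpleGraph.Walk.support_map] at hx1
    obtain ⟨y, hy, rfl⟩ := List.mem_map.mp hx1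
    exact y.2
  set S : Set V := (B₁ ∪ B₂) ∪ {x | x ∈ (q.1 : G.Walk b₁ b₂).support} with hSdef
  have hwS : w ∈ S := Or.inl (Or.inl hw1)
  have hb₁S : b₁ ∈ S := Or.inl (Or.inl hb₁)
  have hb₂S : b₂ ∈ S := Or.inl (Or.inr hb₂)
  have hqS : ∀ x ∈ (q.1 : G.Walk b₁ b₂).support, x ∈ S := fun x hx => Or.inr hx
  -- connectivity of S
  have hconnS : (SimpleGraph.induce S G).Connected := by
    haveI : Nonempty ↥S := ⟨⟨w, hwS⟩⟩
    constructor
    apply precon_of_hub hwS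
    intro a ha
    rcases ha with (h1 | h2) | hq
    · refine reach_hub hwS _ ?_
      by_cases hab : a = w
      · exact Or.inl hab
      · exact Or.inr (hc1 h1 hw1 hab)
    · refine reach_hub hwS _ ?_
      by_cases hab : a = w
      · exact Or.inl hab
      · exact Or.inr (hc2 h2 hw2 hab)
    · refine (reach_of_walk ((q.1 : G.Walk b₁ b₂).takeUntil a hq).reverse ?_ _ hb₁S).trans
        (reach_hub hwS hb₁S (Or.inr (hc1 hb₁ hw1 hb₁w)))
      intro t ht
      rw [SimpleGraph.Walk.support_reverse, List.mem_reverse] at ht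
      exact hqS t (SimpleGraph.Walk.support_takeUntil_subset _ hq ht)
  -- no cut vertex in S
  have hncvS : HasNoCutVertex (SimpleGraph.induce S G) := by
    apply noCut_of_del_precon
    intro z hzS
    by_cases hzw : z = w
    · subst hzw
      -- hub b₁
      have hb₁C : b₁ ∈ S \ {z} := ⟨hb₁S, hb₁w⟩
      apply precon_of_hub hb₁C
      intro a ha
      have haS := ha.1
      have haz : a ≠ z := ha.2
      rcases haS with (h1 | h2) | hq
      · refine reach_hub hb₁C _ ?_
        by_cases hab : a = b₁
        · exact Or.inl hab
        · exact Or.inr (hc1 h1 hb₁ hab)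
      · have hb₂C : b₂ ∈ S \ {z} := ⟨hb₂S, hb₂w⟩
        refine SimpleGraph.Reachable.trans (reach_hub hb₂C _ ?_)
          (reach_of_walk (q.1 : G.Walk b₁ b₂).reverse ?_ hb₂C hb₁C)
        · by_cases hab : a = b₂
          · exact Or.inl hab
          · exact Or.inr (hc2 h2 hb₂ hab)
        · intro t ht
          rw [SimpleGraph.Walk.support_reverse, List.mem_reverse] at ht
          exact ⟨hqS t ht, hqsup t ht⟩
      · refine reach_of_walk ((q.1 : G.Walk b₁ b₂).takeUntil a hq).reverse ?_ _ hb₁C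
        intro t ht
        rw [SimpleGraph.Walk.support_reverse, List.mem_reverse] at ht
        have htq := SimpleGraph.Walk.support_takeUntil_subset _ hq ht
        exact ⟨hqS t htq, hqsup t htq⟩
    · -- hub w
      have hwC : w ∈ S \ {z} := ⟨hwS, fun h => hzw (Set.mem_singleton_iff.mp h).symm⟩
      apply precon_of_hub hwC
      intro a ha
      have haS := ha.1
      have haz : a ≠ z := ha.2
      rcases haS with (h1 | h2) | hq
      · refine reach_hub hwC _ ?_
        by_cases hab : a = w
        · exact Or.inl hab
        · exact Or.inr (hc1 h1 hw1 hab)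
      · refine reach_hub hwC _ ?_
        by_cases hab : a = w
        · exact Or.inl hab
        · exact Or.inr (hc2 h2 hw2 hab)
      · have hsplit : z ∉ ((q.1 : G.Walk b₁ b₂).takeUntil a hq).support ∨
            z ∉ ((q.1 : G.Walk b₁ b₂).dropUntil a hq).support :=
          split_avoid q.2 hq haz
        rcases hsplit with hL | hR
        · have hb₁C : b₁ ∈ S \ {z} := ⟨hb₁S, fun h =>
            hL ((Set.mem_singleton_iff.mp h) ▸ SimpleGraph.Walk.start_mem_support _)⟩
          refine (reach_of_walk ((q.1 : G.Walk b₁ b₂).takeUntil a hq).reverse ?_ _ hb₁C).trans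
            (reach_hub hwC hb₁C (Or.inr (hc1 hb₁ hw1 hb₁w)))
          intro t ht
          rw [SimpleGraph.Walk.support_reverse, List.mem_reverse] at ht
          have htq := SimpleGraph.Walk.support_takeUntil_subset _ hq ht
          exact ⟨hqS t htq, fun hh => hL ((Set.mem_singleton_iff.mp hh) ▸ ht)⟩
        · have hb₂C : b₂ ∈ S \ {z} := ⟨hb₂S, fun h =>
            hR ((Set.mem_singleton_iff.mp h) ▸ SimpleGraph.Walk.end_mem_support _)⟩
          refine (reach_of_walk ((q.1 : G.Walk b₁ b₂).dropUntil a hq) ?_ _ hb₂C).trans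
            (reach_hub hwC hb₂C (Or.inr (hc2 hb₂ hw2 hb₂w)))
          intro t ht
          have htq := SimpleGraph.Walk.support_dropUntil_subset _ hq ht
          exact ⟨hqS t htq, fun hh => hR ((Set.mem_singleton_iff.mp hh) ▸ ht)⟩
  have hSB : S = B₁ := hB1.2.2.2 S (fun y hy => Or.inl (Or.inl hy)) hconnS hncvS
  exact hb₂n (hSB ▸ hb₂S)
lemma adj_of_inl {v : {v : V // IsCutVertex G v}} {y : BCVert G}
    (h : (bcGraph G).Adj (Sum.inl v) y) :
    ∃ B : {B : Set V // IsBlock G B}, y = Sum.inr B ∧ v.1 ∈ B.1 := by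
  cases y with
  | inl w =>
    exfalso
    rw [bcGraph, SimpleGraph.fromRel_adj] at h
    rcases h with ⟨hne, h | h⟩ <;> simp [bcRel] at h
  | inr B =>
    refine ⟨B, rfl, ?_⟩
    rw [bcGraph, SimpleGraph.fromRel_adj] at h
    rcases h with ⟨hne, h | h⟩
    · exact h
    · simp [bcRel] at h
lemma adj_of_inr {B : {B : Set V // IsBlock G B}} {y : BCVert G}
    (h : (bcGraph G).Adj (Sum.inr B) y) :
    ∃ w : {v : V // IsCutVertex G v}, y = Sum.inl w ∧ w.1 ∈ B.1 := by
  cases y with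
  | inl w =>
    refine ⟨w, rfl, ?_⟩
    rw [bcGraph, SimpleGraph.fromRel_adj] at h
    rcases h with ⟨hne, h | h⟩
    · simp [bcRel] at h
    · exact h
  | inr B' =>
    exfalso
    rw [bcGraph, SimpleGraph.fromRel_adj] at h
    rcases h with ⟨hne, h | h⟩ <;> simp [bcRel] at h

lemma inN2_inl {v : {v : V // IsCutVertex G v}} {u : BCVert G}
    (h : InN2 (bcGraph G) (Sum.inl v) u) :
    u = Sum.inl v ∨
    (∃ B : {B : Set V // IsBlock G B}, u = Sum.inr B ∧ v.1 ∈ B.1) ∨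
    (∃ (B : {B : Set V // IsBlock G B}) (w : {w : V // IsCutVertex G w}),
        u = Sum.inl w ∧ v.1 ∈ B.1 ∧ w.1 ∈ B.1) := by
  rcases h with h | h | ⟨z, hz1, hz2⟩
  · exact Or.inl h.symm
  · obtain ⟨B, rfl, hm⟩ := adj_of_inl h
    exact Or.inr (Or.inl ⟨B, rfl, hm⟩)
  · obtain ⟨B, rfl, hm⟩ := adj_of_inl hz1
    obtain ⟨w, rfl, hm2⟩ := adj_of_inr hz2
    exact Or.inr (Or.inr ⟨B, w, rfl, hm, hm2⟩)

lemma two_le_nbrSum_single [Fintype V] {f : V → ℕ} {v w : V} (h : G.Adj v w)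
    (hf : 2 ≤ f w) : 2 ≤ nbrSum G f v := by
  unfold nbrSum
  exact le_trans hf (Finset.single_le_sum (fun i _ => Nat.zero_le _)
    (by simp [h]))

lemma two_le_nbrSum_pair [Fintype V] {f : V → ℕ} {v w₁ w₂ : V} (h1 : G.Adj v w₁)
    (h2 : G.Adj v w₂) (hne : w₁ ≠ w₂) (hf1 : 1 ≤ f w₁) (hf2 : 1 ≤ f w₂) :
    2 ≤ nbrSum G f v := by
  classical
  unfold nbrSum
  have hsub : ({w₁, w₂} : Finset V) ⊆ Finset.univ.filter (fun u => G.Adj v u) := by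
    intro x hx
    rcases Finset.mem_insert.mp hx with rfl | hx
    · simp [h1]
    · rw [Finset.mem_singleton] at hx
      subst hx; simp [h2]
  calc 2 ≤ f w₁ + f w₂ := by omega
    _ = ∑ x ∈ ({w₁, w₂} : Finset V), f x := (Finset.sum_pair hne).symm
    _ ≤ _ := Finset.sum_le_sum_of_subset hsub
end Helpers

theorem stmt_14 {V : Type*} [Fintype V] (G : SimpleGraph V)
    (hconn : G.Connected) (hbg : IsBlockGraph G)
    (hnc : ∃ a b : V, a ≠ b ∧ ¬ G.Adj a b)
    (fσ : BCVert G → ℕ) (hb : ∀ x, fσ x ≤ 2)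
    (h1 : ∀ B : Set V, ∀ hB : IsBlock G B, B.ncard = (cutSet G B).ncard + 1 →
      fσ (Sum.inr ⟨B, hB⟩) ≤ 1)
    (h2 : ∀ B : Set V, ∀ hB : IsBlock G B,
      B.ncard = (cutSet G B).ncard ∨ (cutSet G B).ncard + 2 ≤ B.ncard →
      fσ (Sum.inr ⟨B, hB⟩) = 0)
    (h3 : ∀ v : V, ∀ hv : IsCutVertex G v, fσ (Sum.inl ⟨v, hv⟩) = 0 →
      (∃ u : BCVert G, InN2 (bcGraph G) (Sum.inl ⟨v, hv⟩) u ∧ fσ u = 2) ∨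
      (∃ u₁ u₂ : BCVert G, u₁ ≠ u₂ ∧
        InN2 (bcGraph G) (Sum.inl ⟨v, hv⟩) u₁ ∧ InN2 (bcGraph G) (Sum.inl ⟨v, hv⟩) u₂ ∧
        fσ u₁ = 1 ∧ fσ u₂ = 1))
    (h4 : ∀ B : Set V, ∀ hB : IsBlock G B, (cutSet G B).ncard + 1 ≤ B.ncard →
      fσ (Sum.inr ⟨B, hB⟩) = 0 →
      (∃ u : BCVert G, (bcGraph G).Adj (Sum.inr ⟨B, hB⟩) u ∧ fσ u = 2) ∨
      (∃ u₁ u₂ : BCVert G, u₁ ≠ u₂ ∧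
        (bcGraph G).Adj (Sum.inr ⟨B, hB⟩) u₁ ∧ (bcGraph G).Adj (Sum.inr ⟨B, hB⟩) u₂ ∧
        fσ u₁ = 1 ∧ fσ u₂ = 1))
    (f : V → ℕ)
    (hfc : ∀ v : V, ∀ hv : IsCutVertex G v, f v = fσ (Sum.inl ⟨v, hv⟩))
    (hfb : ∀ B : Set V, ∀ hB : IsBlock G B, ∀ v ∈ B, ¬ IsCutVertex G v →
      f v = fσ (Sum.inr ⟨B, hB⟩)) :
    IsR2DF G f ∧ ∑ v, f v = ∑ x, fσ x := by
  classical
  have hcutsub : ∀ B : Set V, cutSet G B ⊆ B := fun B x hx => hx.1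
  have hcard : ∀ B : Set V, (cutSet G B).ncard ≤ B.ncard ∧
      (B \ cutSet G B).ncard = B.ncard - (cutSet G B).ncard := fun B =>
    ⟨Set.ncard_le_ncard (hcutsub B) (Set.toFinite _),
     Set.ncard_diff (hcutsub B) (Set.toFinite _)⟩
  have hdiffmem : ∀ (B : Set V) (w : V),
      w ∈ B \ cutSet G B ↔ (w ∈ B ∧ ¬ IsCutVertex G w) := by
    intro B w
    constructor
    · rintro ⟨hm, hc⟩; exact ⟨hm, fun hcc => hc ⟨hm, hcc⟩⟩
    · rintro ⟨hm, hc⟩; exact ⟨hm, fun hcc => hc hcc.2⟩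
  have hble : ∀ (B : Set V) (hB : IsBlock G B), fσ (Sum.inr ⟨B, hB⟩) ≤ 1 := by
    intro B hB
    obtain ⟨hle, -⟩ := hcard B
    rcases Nat.lt_or_ge B.ncard ((cutSet G B).ncard + 2) with h | h
    · have hor : B.ncard = (cutSet G B).ncard ∨ B.ncard = (cutSet G B).ncard + 1 := by omega
      rcases hor with h' | h'
      · rw [h2 B hB (Or.inl h')]; omega
      · exact h1 B hB h'
    · rw [h2 B hB (Or.inr h)]; omega
  have htype1 : ∀ (B : Set V) (hB : IsBlock G B), fσ (Sum.inr ⟨B, hB⟩) = 1 →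
      ∃ w, B \ cutSet G B = {w} := by
    intro B hB hf1
    obtain ⟨hle, hd⟩ := hcard B
    have hn : B.ncard = (cutSet G B).ncard + 1 := by
      by_contra hne
      have hor : B.ncard = (cutSet G B).ncard ∨ (cutSet G B).ncard + 2 ≤ B.ncard := by omega
      rw [h2 B hB hor] at hf1
      exact absurd hf1 (by omega)
    exact Set.ncard_eq_one.mp (by omega)
  have hnb : ∀ w : V, ∃ B : Set V, IsBlock G B ∧ w ∈ B := fun w => exists_block w
  refine ⟨⟨?_, ?_⟩, ?_⟩
  · -- bound
    intro v
    by_cases hv : IsCutVertex G v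
    · rw [hfc v hv]; exact hb _
    · obtain ⟨B, hB, hvB⟩ := hnb v
      rw [hfb B hB v hvB hv]; exact hb _
  · -- domination
    intro v hv0
    by_cases hv : IsCutVertex G v
    · have h0 : fσ (Sum.inl ⟨v, hv⟩) = 0 := by rw [← hfc v hv]; exact hv0
      have extract : ∀ (u : BCVert G) (c : ℕ), c = 1 ∨ c = 2 →
          InN2 (bcGraph G) (Sum.inl ⟨v, hv⟩) u → fσ u = c →
          ∃ w, G.Adj v w ∧ f w = c ∧
            (∀ hw : IsCutVertex G w, u = Sum.inl ⟨w, hw⟩) ∧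
            (¬ IsCutVertex G w → ∃ (B : Set V) (hB : IsBlock G B),
              u = Sum.inr ⟨B, hB⟩ ∧ w ∈ B) := by
        intro u c hc hN hfu
        rcases inN2_inl hN with rfl | ⟨Bb, rfl, hvB⟩ | ⟨Bb, wb, rfl, hvB, hwB⟩
        · rw [h0] at hfu; omega
        · obtain ⟨B, hB⟩ := Bb
          have hc1 : c = 1 := by have hle := hble B hB; omega
          subst hc1
          obtain ⟨w, hwset⟩ := htype1 B hB hfu
          have hwd : w ∈ B \ cutSet G B := by rw [hwset]; exact rfl
          have hwmem := (hdiffmem B w).mp hwd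
          have hwv : w ≠ v := fun h => hwmem.2 (h ▸ hv)
          have hadj : G.Adj v w := hbg B hB hvB hwmem.1 (Ne.symm hwv)
          refine ⟨w, hadj, ?_, ?_, ?_⟩
          · rw [hfb B hB w hwmem.1 hwmem.2]; exact hfu
          · intro hw; exact absurd hw hwmem.2
          · intro _; exact ⟨B, hB, rfl, hwmem.1⟩
        · obtain ⟨B, hB⟩ := Bb
          have hwv : wb.1 ≠ v := by
            intro h
            have heq : (Sum.inl wb : BCVert G) = Sum.inl ⟨v, hv⟩ := by
              congr 1; exact Subtype.ext h
            rw [heq, h0] at hfu; omega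
          have hadj : G.Adj v wb.1 := hbg B hB hvB hwB (Ne.symm hwv)
          refine ⟨wb.1, hadj, ?_, ?_, ?_⟩
          · rw [hfc wb.1 wb.2]; exact hfu
          · intro hw; congr 1
          · intro hnc2; exact absurd wb.2 hnc2
      rcases h3 v hv h0 with ⟨u, hN, hfu⟩ | ⟨u₁, u₂, hne, hN1, hN2, hfu1, hfu2⟩
      · obtain ⟨w, hadj, hfw, -, -⟩ := extract u 2 (Or.inr rfl) hN hfu
        exact two_le_nbrSum_single hadj (le_of_eq hfw.symm)
      · obtain ⟨w₁, hadj1, hfw1, hT1, hT1'⟩ := extract u₁ 1 (Or.inl rfl) hN1 hfu1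
        obtain ⟨w₂, hadj2, hfw2, hT2, hT2'⟩ := extract u₂ 1 (Or.inl rfl) hN2 hfu2
        have hwne : w₁ ≠ w₂ := by
          rintro rfl
          by_cases hw : IsCutVertex G w₁
          · exact hne ((hT1 hw).trans (hT2 hw).symm)
          · obtain ⟨B₁, hB₁, hu1, hm1⟩ := hT1' hw
            obtain ⟨B₂, hB₂, hu2, hm2⟩ := hT2' hw
            have hBeq : B₁ = B₂ := block_unique hbg hB₁ hB₂ hm1 hm2 hw
            subst hBeq
            exact hne (hu1.trans hu2.symm)
        exact two_le_nbrSum_pair hadj1 hadj2 hwne (by omega) (by omega)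
    · obtain ⟨B, hB, hvB⟩ := hnb v
      have h0 : fσ (Sum.inr ⟨B, hB⟩) = 0 := by rw [← hfb B hB v hvB hv]; exact hv0
      have hlt : (cutSet G B).ncard + 1 ≤ B.ncard := by
        obtain ⟨hle, hd⟩ := hcard B
        have hpos : 0 < (B \ cutSet G B).ncard :=
          (Set.ncard_pos (Set.toFinite _)).mpr ⟨v, (hdiffmem B v).mpr ⟨hvB, hv⟩⟩
        omega
      rcases h4 B hB hlt h0 with ⟨u, hadj, hfu⟩ | ⟨u₁, u₂, hne, ha1, ha2, hfu1, hfu2⟩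
      · obtain ⟨w, rfl, hwB⟩ := adj_of_inr hadj
        have hwv : w.1 ≠ v := fun h => hv (h ▸ w.2)
        have hadj' : G.Adj v w.1 := hbg B hB hvB hwB (Ne.symm hwv)
        have hfw : f w.1 = 2 := by rw [hfc w.1 w.2]; exact hfu
        exact two_le_nbrSum_single hadj' (le_of_eq hfw.symm)
      · obtain ⟨w₁, rfl, hw1B⟩ := adj_of_inr ha1
        obtain ⟨w₂, rfl, hw2B⟩ := adj_of_inr ha2
        have hwne : w₁.1 ≠ w₂.1 := fun h => hne (congrArg Sum.inl (Subtype.ext h))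
        have hv1 : w₁.1 ≠ v := fun h => hv (h ▸ w₁.2)
        have hv2 : w₂.1 ≠ v := fun h => hv (h ▸ w₂.2)
        have hfw1 : f w₁.1 = 1 := by rw [hfc w₁.1 w₁.2]; exact hfu1
        have hfw2 : f w₂.1 = 1 := by rw [hfc w₂.1 w₂.2]; exact hfu2
        exact two_le_nbrSum_pair (hbg B hB hvB hw1B (Ne.symm hv1))
          (hbg B hB hvB hw2B (Ne.symm hv2)) hwne (by omega) (by omega)
  · -- weight equality
    have hper : ∀ (B : Set V) (hB : IsBlock G B), fσ (Sum.inr ⟨B, hB⟩) =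
        ∑ w ∈ Finset.univ.filter (fun w => w ∈ B ∧ ¬ IsCutVertex G w), f w := by
      intro B hB
      have hall : ∀ w ∈ Finset.univ.filter (fun w => w ∈ B ∧ ¬ IsCutVertex G w),
          f w = fσ (Sum.inr ⟨B, hB⟩) := by
        intro w hw
        rw [Finset.mem_filter] at hw
        exact hfb B hB w hw.2.1 hw.2.2
      have hsum : ∑ w ∈ Finset.univ.filter (fun w => w ∈ B ∧ ¬ IsCutVertex G w), f w =
          (Finset.univ.filter (fun w => w ∈ B ∧ ¬ IsCutVertex G w)).card *
            fσ (Sum.inr ⟨B, hB⟩) := by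
        rw [Finset.sum_congr rfl hall, Finset.sum_const, smul_eq_mul]
      have hkn : (Finset.univ.filter (fun w => w ∈ B ∧ ¬ IsCutVertex G w)).card =
          (B \ cutSet G B).ncard := by
        rw [Set.ncard_eq_toFinset_card']
        congr 1
        ext w
        rw [Finset.mem_filter, Set.mem_toFinset]
        simp only [Finset.mem_univ, true_and]
        exact (hdiffmem B w).symm
      by_cases hk1 : (Finset.univ.filter (fun w => w ∈ B ∧ ¬ IsCutVertex G w)).card = 1
      · rw [hsum, hk1, one_mul]
      · have hf0 : fσ (Sum.inr ⟨B, hB⟩) = 0 := by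
          obtain ⟨hle, hd⟩ := hcard B
          apply h2 B hB
          rw [hkn] at hk1
          omega
        rw [hf0, hsum, hf0, Nat.mul_zero]
    let nb : V → {B : Set V // IsBlock G B} := fun w => ⟨(hnb w).choose, (hnb w).choose_spec.1⟩
    have hnbm : ∀ w, w ∈ (nb w).1 := fun w => (hnb w).choose_spec.2
    have hfiber := Finset.sum_fiberwise_of_maps_to
      (fun (x : V) (_ : x ∈ Finset.univ.filter (fun w => ¬ IsCutVertex G w)) =>
        Finset.mem_univ (nb x)) f
    have hfib2 : ∀ Bb : {B : Set V // IsBlock G B},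
        (Finset.univ.filter (fun w => ¬ IsCutVertex G w)).filter (fun w => nb w = Bb) =
        Finset.univ.filter (fun w => w ∈ Bb.1 ∧ ¬ IsCutVertex G w) := by
      intro Bb
      ext w
      simp only [Finset.mem_filter, Finset.mem_univ, true_and]
      constructor
      · rintro ⟨hnc2, rfl⟩; exact ⟨hnbm w, hnc2⟩
      · rintro ⟨hm, hnc2⟩
        exact ⟨hnc2, Subtype.ext (block_unique hbg (nb w).2 Bb.2 (hnbm w) hm hnc2)⟩
    calc ∑ v, f v
        = ∑ v ∈ Finset.univ.filter (fun v => IsCutVertex G v), f v +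
          ∑ v ∈ Finset.univ.filter (fun v => ¬ IsCutVertex G v), f v :=
          (Finset.sum_filter_add_sum_filter_not _ _ _).symm
      _ = ∑ x : BCVert G, fσ x := by
          rw [Fintype.sum_sum_type]
          congr 1
          · rw [Finset.sum_subtype (p := fun v => IsCutVertex G v)
              (Finset.univ.filter (fun v => IsCutVertex G v)) (fun x => by simp) f]
            exact Finset.sum_congr rfl (fun a _ => hfc a.1 a.2)
          · rw [← hfiber]
            refine Finset.sum_congr rfl ?_
            intro Bb _
            rw [hfib2 Bb]
            obtain ⟨B, hB⟩ := Bb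
            exact (hper B hB).symm
end Helpers
end
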